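/- Let X ⊆ Σ^ℤ and X̃ ⊆ Σ̃^ℤ be subshifts over finite alphabets, and let φ : X̃ → X be a topological conjugacy such that φ has coding window [-L̃, L̃] and φ⁻¹ has coding window [-L, L]. If x̃ ∈ X̃, x = φ(x̃), and the word x_{[I₋, I₊]} is synchronizing for X (for some I₋ ≤ I₊ in ℤ), then the word x̃_{[I₋ - L̃ - L, I₊ + L̃ + L]} is synchronizing for X̃. -/

import Mathlib

/-- The shift on `Σ^ℤ`: `(x_i)_{i∈ℤ} ↦ (x_{i+1})_{i∈ℤ}`. -/
def shift {A : Type*} (x : ℤ → A) : ℤ → A := fun i => x (i + 1)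

/-- The word `x_{[a,b]}` carried by the block of `x` on the interval `[a, b]`. -/
def block {A : Type*} (x : ℤ → A) (a b : ℤ) : List A :=
  (List.range (b + 1 - a).toNat).map fun k => x (a + k)

/-- A word is admissible for `X` if it appears in a point of `X`. -/
def Admissible {A : Type*} (X : Set (ℤ → A)) (w : List A) : Prop :=
  ∃ x ∈ X, ∃ n : ℤ, ∀ (k : ℕ) (h : k < w.length), x (n + k) = w.get ⟨k, h⟩

/-- A word `v` is synchronizing for `X` if it is admissible and whenever `uv` and `vw`
are admissible, so is `uvw`. -/
def IsSyncWord {A : Type*} (X : Set (ℤ → A)) (v : List A) : Prop :=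
  Admissible X v ∧ ∀ u w : List A, Admissible X (u ++ v) → Admissible X (v ++ w) →
    Admissible X (u ++ v ++ w)

/-- A subshift: a nonempty, closed, shift-invariant subset of `Σ^ℤ`. -/
def IsSubshift {A : Type*} [TopologicalSpace A] (X : Set (ℤ → A)) : Prop :=
  X.Nonempty ∧ IsClosed X ∧ shift '' X = X

section Aux
variable {A : Type*}

def Carries (x : ℤ → A) (n : ℤ) (w : List A) : Prop :=
  ∀ (k : ℕ) (hk : k < w.length), x (n + k) = w.get ⟨k, hk⟩

lemma block_eq (x : ℤ → A) (a b : ℤ) :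
    block x a b = (List.range (b + 1 - a).toNat).map (fun k : ℕ => x (a + (k : ℤ))) := by
  simp [block, List.flatMap_singleton', ← List.map_eq_flatMap, List.map_map, Function.comp_def]

lemma block_length (x : ℤ → A) (a b : ℤ) : (block x a b).length = (b + 1 - a).toNat := by
  rw [block_eq, List.length_map, List.length_range]

lemma block_get (x : ℤ → A) (a b : ℤ) (k : ℕ) (hk : k < (block x a b).length) :
    (block x a b).get ⟨k, hk⟩ = x (a + k) := by
  simp [block_eq]

lemma carries_block_iff {x y : ℤ → A} {a b : ℤ} :
    Carries x a (block y a b) ↔ ∀ i, a ≤ i → i ≤ b → x i = y i := by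
  constructor
  · intro h i h1 h2
    have hk : (i - a).toNat < (block y a b).length := by rw [block_length]; omega
    have h3 := h (i - a).toNat hk
    rw [block_get] at h3
    have he : a + ((i - a).toNat : ℤ) = i := by omega
    rwa [he] at h3
  · intro h k hk
    rw [block_get]
    have hk' := hk
    rw [block_length] at hk'
    apply h <;> omega

lemma carries_append {x : ℤ → A} {n : ℤ} {u v : List A} :
    Carries x n (u ++ v) ↔ Carries x n u ∧ Carries x (n + u.length) v := by
  simp only [Carries, List.get_eq_getElem]
  constructor
  · intro h
    constructor
    · intro k hk
      have hk2 : k < (u ++ v).length := by simp; omega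
      have h3 := h k hk2
      rwa [List.getElem_append_left hk] at h3
    · intro k hk
      have hk2 : u.length + k < (u ++ v).length := by simp; omega
      have h3 := h (u.length + k) hk2
      rw [List.getElem_append_right (by omega)] at h3
      have e : n + ((u.length + k : ℕ) : ℤ) = n + u.length + k := by push_cast; ring
      rw [e] at h3
      simpa using h3
  · rintro ⟨h1, h2⟩ k hk
    rcases lt_or_ge k u.length with hlt | hge
    · rw [List.getElem_append_left hlt]; exact h1 k hlt
    · rw [List.getElem_append_right hge]
      have h3 := h2 (k - u.length) (by simp at hk; omega)
      have e : n + u.length + ((k - u.length : ℕ) : ℤ) = n + k := by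
        have : (((k : ℕ) - u.length : ℕ) : ℤ) = (k : ℤ) - u.length := by omega
        rw [this]; ring
      rwa [e] at h3

lemma mem_translate [TopologicalSpace A] {X : Set (ℤ → A)} (hX : IsSubshift X)
    {x : ℤ → A} (hx : x ∈ X) (t : ℤ) : (fun i => x (i + t)) ∈ X := by
  induction t using Int.induction_on with
  | zero => simpa using hx
  | succ n ih =>
      have hm : shift (fun i => x (i + (n : ℤ))) ∈ X := by
        rw [← hX.2.2]; exact ⟨_, ih, rfl⟩
      have he : (fun i => x (i + ((n : ℤ) + 1))) = shift (fun i => x (i + (n : ℤ))) := by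
        funext i; show x (i + ((n : ℤ) + 1)) = x (i + 1 + n); congr 1; ring
      rw [he]; exact hm
  | pred n ih =>
      have hmem : (fun i => x (i + -(n : ℤ))) ∈ shift '' X := by rw [hX.2.2]; exact ih
      obtain ⟨h, hh, hsh⟩ := hmem
      have he : h = fun i => x (i + (-(n : ℤ) - 1)) := by
        funext j
        have h1 := congrFun hsh (j - 1)
        have h2 : shift h (j - 1) = h j := by simp [shift]
        rw [h2] at h1
        rw [h1]; congr 1; ring
      rw [← he]; exact hh

lemma admissible_at [TopologicalSpace A] {X : Set (ℤ → A)} (hX : IsSubshift X) {w : List A}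
    (h : Admissible X w) (n : ℤ) : ∃ x ∈ X, Carries x n w := by
  obtain ⟨x, hx, m, hm⟩ := h
  refine ⟨fun i => x (i + (m - n)), mem_translate hX hx _, fun k hk => ?_⟩
  have h3 := hm k hk
  rw [← h3]; congr 1; ring

lemma admissible_of_carries {X : Set (ℤ → A)} {x : ℤ → A} (hx : x ∈ X) {n : ℤ} {w : List A}
    (h : Carries x n w) : Admissible X w := ⟨x, hx, n, h⟩

end Aux

/-- Lemma 2.1: if `φ : X̃ → X` is a topological conjugacy with coding window `[-L̃, L̃]`, and
`φ⁻¹` has coding window `[-L, L]`, `x̃ ∈ X̃`, `x = φ(x̃)`, and `x_{[I₋,I₊]}` is synchronizing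
for `X`, then `x̃_{[I₋-L̃-L, I₊+L̃+L]}` is synchronizing for `X̃`. -/
theorem stmt0 {A B : Type*} [Fintype A] [Fintype B]
    [TopologicalSpace A] [DiscreteTopology A] [TopologicalSpace B] [DiscreteTopology B]
    (X : Set (ℤ → A)) (Xt : Set (ℤ → B)) (hX : IsSubshift X) (hXt : IsSubshift Xt)
    (F : (ℤ → B) → (ℤ → A)) (G : (ℤ → A) → (ℤ → B))
    (hF : ∀ x ∈ Xt, F x ∈ X) (hG : ∀ x ∈ X, G x ∈ Xt)
    (hGF : ∀ x ∈ Xt, G (F x) = x) (hFG : ∀ x ∈ X, F (G x) = x)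
    (hshift : ∀ x ∈ Xt, F (shift x) = shift (F x))
    (Lt L : ℤ) (hLt : 0 ≤ Lt) (hL : 0 ≤ L)
    (hFwin : ∀ x ∈ Xt, ∀ y ∈ Xt, ∀ i : ℤ,
      (∀ j : ℤ, i - Lt ≤ j → j ≤ i + Lt → x j = y j) → F x i = F y i)
    (hGwin : ∀ x ∈ X, ∀ y ∈ X, ∀ i : ℤ,
      (∀ j : ℤ, i - L ≤ j → j ≤ i + L → x j = y j) → G x i = G y i)
    (xt : ℤ → B) (hxt : xt ∈ Xt) (I₁ I₂ : ℤ) (hI : I₁ ≤ I₂)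
    (hsync : IsSyncWord X (block (F xt) I₁ I₂)) :
    IsSyncWord Xt (block xt (I₁ - Lt - L) (I₂ + Lt + L)) := by
  obtain ⟨hs1, hs2⟩ := hsync
  set a' := I₁ - Lt - L with ha'
  set b' := I₂ + Lt + L with hb'
  have hvt_len : (((block xt a' b').length : ℕ) : ℤ) = b' + 1 - a' := by
    rw [block_length]; omega
  constructor
  · exact admissible_of_carries hxt (carries_block_iff.mpr fun i _ _ => rfl)
  · intro u w hu hw
    -- position the point carrying u ++ ṽ so that ṽ sits on [a', b']
    obtain ⟨yt, hyt, hyc⟩ := admissible_at hXt hu (a' - (u.length : ℤ))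
    rw [carries_append] at hyc
    obtain ⟨hyu, hyv⟩ := hyc
    have e1 : a' - (u.length : ℤ) + (u.length : ℤ) = a' := by ring
    rw [e1] at hyv
    have hyxt : ∀ i, a' ≤ i → i ≤ b' → yt i = xt i := carries_block_iff.mp hyv
    -- position the point carrying ṽ ++ w so that ṽ sits on [a', b']
    obtain ⟨zt, hzt, hzc⟩ := admissible_at hXt hw a'
    rw [carries_append] at hzc
    obtain ⟨hzv, hzw⟩ := hzc
    have hzxt : ∀ i, a' ≤ i → i ≤ b' → zt i = xt i := carries_block_iff.mp hzv
    have e2 : a' + (((block xt a' b').length : ℕ) : ℤ) = b' + 1 := by rw [hvt_len]; ring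
    rw [e2] at hzw
    -- images under F agree with F xt on [I₁ - L, I₂ + L]
    have hyX : F yt ∈ X := hF yt hyt
    have hzX : F zt ∈ X := hF zt hzt
    have hy : ∀ i, I₁ - L ≤ i → i ≤ I₂ + L → F yt i = F xt i := fun i h1 h2 =>
      hFwin yt hyt xt hxt i (fun j hj1 hj2 => hyxt j (by omega) (by omega))
    have hz : ∀ i, I₁ - L ≤ i → i ≤ I₂ + L → F zt i = F xt i := fun i h1 h2 =>
      hFwin zt hzt xt hxt i (fun j hj1 hj2 => hzxt j (by omega) (by omega))
    set n₀ := a' - (u.length : ℤ) - L with hn₀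
    -- apply the synchronization hypothesis downstairs
    have hUV : Admissible X (block (F yt) n₀ (I₁ - 1) ++ block (F xt) I₁ I₂) := by
      refine admissible_of_carries hyX (n := n₀) ?_
      rw [carries_append]
      have eU : n₀ + (((block (F yt) n₀ (I₁ - 1)).length : ℕ) : ℤ) = I₁ := by
        rw [block_length]; omega
      rw [eU]
      exact ⟨carries_block_iff.mpr fun i _ _ => rfl,
        carries_block_iff.mpr fun i h1 h2 => hy i (by omega) (by omega)⟩
    have hVW : Admissible X (block (F xt) I₁ I₂ ++
        block (F zt) (I₂ + 1) (b' + (w.length : ℤ) + L)) := by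
      refine admissible_of_carries hzX (n := I₁) ?_
      rw [carries_append]
      have eV : I₁ + (((block (F xt) I₁ I₂).length : ℕ) : ℤ) = I₂ + 1 := by
        rw [block_length]; omega
      rw [eV]
      exact ⟨carries_block_iff.mpr fun i h1 h2 => hz i (by omega) (by omega),
        carries_block_iff.mpr fun i _ _ => rfl⟩
    obtain ⟨p, hpX, hpc⟩ := admissible_at hX (hs2 _ _ hUV hVW) n₀
    rw [carries_append, carries_append] at hpc
    obtain ⟨⟨hpU, hpV⟩, hpW⟩ := hpc
    have eU : n₀ + (((block (F yt) n₀ (I₁ - 1)).length : ℕ) : ℤ) = I₁ := by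
      rw [block_length]; omega
    rw [eU] at hpV
    have eUV : n₀ + (((block (F yt) n₀ (I₁ - 1) ++ block (F xt) I₁ I₂).length : ℕ) : ℤ)
        = I₂ + 1 := by
      rw [List.length_append, block_length, block_length]; push_cast; omega
    rw [eUV] at hpW
    have hpU' := carries_block_iff.mp hpU
    have hpV' := carries_block_iff.mp hpV
    have hpW' := carries_block_iff.mp hpW
    -- p agrees with F yt on [n₀, I₂ + L] and with F zt on [I₁ - L, b' + |w| + L]
    have hp_y : ∀ j, n₀ ≤ j → j ≤ I₂ + L → p j = F yt j := by
      intro j h1 h2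
      rcases lt_or_ge j I₁ with hlt | hge
      · exact hpU' j h1 (by omega)
      · rcases le_or_gt j I₂ with hle | hgt
        · rw [hpV' j hge hle]; exact (hy j (by omega) (by omega)).symm
        · rw [hpW' j (by omega) (by omega), hz j (by omega) (by omega)]
          exact (hy j (by omega) (by omega)).symm
    have hp_z : ∀ j, I₁ - L ≤ j → j ≤ b' + (w.length : ℤ) + L → p j = F zt j := by
      intro j h1 h2
      rcases le_or_gt (I₂ + 1) j with hge | hlt
      · exact hpW' j hge h2
      · rcases le_or_gt I₁ j with hge1 | hlt1
        · rw [hpV' j hge1 (by omega)]; exact (hz j (by omega) (by omega)).symm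
        · rw [hpU' j (by omega) (by omega), hy j (by omega) (by omega)]
          exact (hz j (by omega) (by omega)).symm
    -- G p agrees with yt on [a' - |u|, I₂] and with zt on [I₁, b' + |w|]
    have hq_y : ∀ i, a' - (u.length : ℤ) ≤ i → i ≤ I₂ → G p i = yt i := by
      intro i h1 h2
      have h3 : G p i = G (F yt) i :=
        hGwin p hpX (F yt) hyX i (fun j hj1 hj2 => hp_y j (by omega) (by omega))
      rw [hGF yt hyt] at h3
      exact h3
    have hq_z : ∀ i, I₁ ≤ i → i ≤ b' + (w.length : ℤ) → G p i = zt i := by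
      intro i h1 h2
      have h3 : G p i = G (F zt) i :=
        hGwin p hpX (F zt) hzX i (fun j hj1 hj2 => hp_z j (by omega) (by omega))
      rw [hGF zt hzt] at h3
      exact h3
    -- assemble
    refine admissible_of_carries (hG p hpX) (n := a' - (u.length : ℤ)) ?_
    rw [carries_append, carries_append]
    rw [e1]
    have e3 : a' + (((block xt a' b').length : ℕ) : ℤ) = b' + 1 := by rw [hvt_len]; ring
    have e4 : a' - (u.length : ℤ) + (((u ++ block xt a' b').length : ℕ) : ℤ) = b' + 1 := by
      rw [List.length_append, block_length]; push_cast; omega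
    rw [e4]
    refine ⟨⟨?_, ?_⟩, ?_⟩
    · intro k hk
      rw [← hyu k hk]
      exact hq_y _ (by omega) (by omega)
    · refine carries_block_iff.mpr fun i h1 h2 => ?_
      rcases le_or_gt i I₂ with hle | hgt
      · rw [hq_y i (by omega) hle]; exact hyxt i h1 h2
      · rw [hq_z i (by omega) (by omega)]; exact hzxt i h1 h2
    · intro k hk
      rw [← hzw k hk]
      exact hq_z _ (by omega) (by omega)
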